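/- Let γ : ℤ → ℂ satisfy γ_{n+1} γ_n ≠ -1 for all n ∈ ℤ, and define α^{(1)}_n = -(γ_{n+1}γ_n + 2γ_{n+1} - 1)/(γ_{n+1}γ_n + 1) and α^{(2)}_n = (γ_{n+1}γ_n - 2γ_n - 1)/(γ_{n+1}γ_n + 1). Then (α^{(1)}_{n+1}+1)(α^{(1)}_n - 1) = -(α^{(2)}_{n+1}+1)(α^{(2)}_n - 1) for all n ∈ ℤ. -/
import Mathlib


/-- With `α^{(1)}_n = -(γ_{n+1}γ_n+2γ_{n+1}-1)/(γ_{n+1}γ_n+1)` and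
`α^{(2)}_n = (γ_{n+1}γ_n-2γ_n-1)/(γ_{n+1}γ_n+1)`, one has
`(α^{(1)}_{n+1}+1)(α^{(1)}_n-1) = -(α^{(2)}_{n+1}+1)(α^{(2)}_n-1)`. -/
theorem stmt_9 (γ : ℤ → ℂ) (hγ : ∀ n : ℤ, γ (n + 1) * γ n ≠ -1)
    (α₁ α₂ : ℤ → ℂ)
    (hα₁ : ∀ n : ℤ, α₁ n =
      -((γ (n + 1) * γ n + 2 * γ (n + 1) - 1) / (γ (n + 1) * γ n + 1)))
    (hα₂ : ∀ n : ℤ, α₂ n =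
      (γ (n + 1) * γ n - 2 * γ n - 1) / (γ (n + 1) * γ n + 1)) :
    ∀ n : ℤ,
      (α₁ (n + 1) + 1) * (α₁ n - 1) = -((α₂ (n + 1) + 1) * (α₂ n - 1)) := by
  intro n
  have h1 : γ (n + 1) * γ n + 1 ≠ 0 := fun h => hγ n (by linear_combination h)
  have h2 : γ (n + 1 + 1) * γ (n + 1) + 1 ≠ 0 := fun h => hγ (n + 1) (by linear_combination h)
  rw [hα₁, hα₁, hα₂, hα₂]
  field_simp
  ring
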